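/- If there exists a strongly non-saturated Aronszajn tree, then the Continuum Hypothesis fails. -/

import Mathlib

noncomputable section

namespace AKST

/-- The first uncountable ordinal. -/
def ω1 : Ordinal.{0} := (Cardinal.aleph 1).ord

/-- The second uncountable ordinal. -/
def ω2 : Ordinal.{0} := (Cardinal.aleph 2).ord

/-- An `ω₁`-tree: a tree of height `ω₁` all of whose levels are countable. -/
structure O1Tree where
  A : Type
  lt : A → A → Prop
  htf : A → Ordinal.{0}
  lt_trans' : ∀ {x y z}, lt x y → lt y z → lt x z
  ht_lt : ∀ {x y}, lt x y → htf x < htf y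
  ht_lt_omega1 : ∀ x, htf x < ω1
  pred_ex : ∀ x, ∀ β < htf x, ∃ y, lt y x ∧ htf y = β
  pred_linear : ∀ {x y z}, lt y x → lt z x → lt y z ∨ y = z ∨ lt z y
  level_countable : ∀ α, {x | htf x = α}.Countable
  levels_nonempty : ∀ α < ω1, ∃ x, htf x = α

namespace O1Tree

/-- A chain: a pairwise comparable set. -/
def Chain (T : O1Tree) (C : Set T.A) : Prop :=
  ∀ x ∈ C, ∀ y ∈ C, x = y ∨ T.lt x y ∨ T.lt y x

/-- An Aronszajn tree: an `ω₁`-tree with no uncountable chains. -/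
def Aronszajn (T : O1Tree) : Prop := ∀ C : Set T.A, T.Chain C → C.Countable

/-- A downwards closed subtree. -/
def DCSubtree (T : O1Tree) (U : Set T.A) : Prop :=
  ∀ x ∈ U, ∀ y, T.lt y x → y ∈ U

/-- `U` and `W` are strongly almost disjoint: `U ∩ W` is a finite union of countable
chains. -/
def StronglyAD (T : O1Tree) (U W : Set T.A) : Prop :=
  ∃ (n : ℕ) (C : Fin n → Set T.A),
    U ∩ W = ⋃ i, C i ∧ ∀ i, T.Chain (C i) ∧ (C i).Countable

/-- `T` is strongly non-saturated: there is a family of (at least) `ω₂`-many distinct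
uncountable downwards closed subtrees of `T` which are pairwise strongly almost
disjoint. -/
def StronglyNonSaturated (T : O1Tree) : Prop :=
  ∃ Us : Ordinal → Set T.A,
    (∀ α < ω2, T.DCSubtree (Us α) ∧ ¬ (Us α).Countable) ∧
    (∀ α < ω2, ∀ β < ω2, α ≠ β → Us α ≠ Us β ∧ T.StronglyAD (Us α) (Us β))

/-- A cofinal branch of `T`. -/
def CofinalBranch (T : O1Tree) (B : Set T.A) : Prop :=
  T.Chain B ∧ T.DCSubtree B ∧ ∀ α < ω1, ∃ x ∈ B, T.htf x = α

end O1Tree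

end AKST

open AKST AKST.O1Tree

namespace AKSTProof

open Cardinal Set

variable (T : O1Tree)

/-- Auxiliary predecessor function: the node below `x` at height `δ` (or `x` itself). -/
def pred (x : T.A) (δ : Ordinal) : T.A :=
  if h : δ < T.htf x then (T.pred_ex x δ h).choose else x

lemma pred_lt {x : T.A} {δ : Ordinal} (h : δ < T.htf x) : T.lt (pred T x δ) x := by
  rw [pred, dif_pos h]; exact (T.pred_ex x δ h).choose_spec.1

lemma htf_pred {x : T.A} {δ : Ordinal} (h : δ ≤ T.htf x) : T.htf (pred T x δ) = δ := by
  rw [pred]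
  split
  · exact (T.pred_ex x δ ‹_›).choose_spec.2
  · exact (le_antisymm h (not_lt.1 ‹_›)).symm

lemma pred_mem {U : Set T.A} (hdc : T.DCSubtree U) {x : T.A} (hx : x ∈ U) (δ : Ordinal) :
    pred T x δ ∈ U := by
  rw [pred]
  split
  · exact hdc x hx _ (T.pred_ex x δ ‹_›).choose_spec.1
  · exact hx

lemma pred_unique {x y z : T.A} (hy : T.lt y x) (hz : T.lt z x) (h : T.htf y = T.htf z) :
    y = z := by
  rcases T.pred_linear hy hz with h1 | h1 | h1
  · exact absurd (T.ht_lt h1) (h ▸ lt_irrefl _)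
  · exact h1
  · exact absurd (T.ht_lt h1) (h ▸ lt_irrefl _)

lemma pred_self {x : T.A} : pred T x (T.htf x) = x := by
  rw [pred, dif_neg (lt_irrefl _)]

lemma pred_pred {x : T.A} {δ γ : Ordinal} (h1 : δ ≤ γ) (h2 : γ ≤ T.htf x) :
    pred T (pred T x γ) δ = pred T x δ := by
  rcases eq_or_lt_of_le h2 with hγ | hγ
  · subst hγ
    rw [pred_self]
  · rcases eq_or_lt_of_le h1 with hδ | hδ
    · subst hδ
      rw [show pred T (pred T x δ) δ = pred T x δ from by
        conv_lhs => rw [pred]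
        rw [dif_neg (by rw [htf_pred T (le_of_lt hγ)]; exact lt_irrefl _)]]
    · have ha : T.htf (pred T x γ) = γ := htf_pred T (le_of_lt hγ)
      refine pred_unique T (x := x) ?_ (pred_lt T (hδ.trans hγ)) ?_
      · exact T.lt_trans' (pred_lt T (by rw [ha]; exact hδ)) (pred_lt T hγ)
      · rw [htf_pred T (by rw [ha]; exact le_of_lt hδ), htf_pred T (le_of_lt (hδ.trans hγ))]


lemma countable_Iio_of_lt {o : Ordinal.{0}} (ho : o < ω1) : (Set.Iio o).Countable := by
  rw [← Set.countable_coe_iff, ← Cardinal.mk_le_aleph0_iff]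
  have h1 : o.card ≤ ℵ₀ := by
    have := Cardinal.lt_ord.1 ho
    rwa [← Cardinal.succ_aleph0, Order.lt_succ_iff] at this
  calc #(Set.Iio o) = Cardinal.lift.{1} o.card := Ordinal.mk_Iio_ordinal o
    _ ≤ Cardinal.lift.{1} ℵ₀ := Cardinal.lift_le.2 h1
    _ = ℵ₀ := Cardinal.lift_aleph0.{1,0}

lemma not_countable_Iio_omega1 : ¬ (Set.Iio ω1).Countable := by
  intro h
  rw [← Set.countable_coe_iff, ← Cardinal.mk_le_aleph0_iff] at h
  rw [Ordinal.mk_Iio_ordinal] at h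
  rw [show ω1.card = Cardinal.aleph 1 from Cardinal.card_ord _] at h
  rw [← Cardinal.lift_aleph0.{1,0}, Cardinal.lift_le] at h
  exact absurd h (not_le.2 Cardinal.aleph0_lt_aleph_one)

lemma countable_le_level {δ : Ordinal} (hδ : δ < ω1) :
    {x : T.A | T.htf x ≤ δ}.Countable := by
  have heq : {x : T.A | T.htf x ≤ δ} = ⋃ γ ∈ Set.Iio (δ + 1), {x : T.A | T.htf x = γ} := by
    ext x
    simp only [Set.mem_setOf_eq, Set.mem_iUnion, Set.mem_Iio]
    constructor
    · intro h; exact ⟨T.htf x, lt_of_le_of_lt h (Order.lt_succ δ), rfl⟩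
    · rintro ⟨γ, hγ, rfl⟩; exact Order.lt_succ_iff.1 hγ
  rw [heq]
  have hδ1 : δ + 1 < ω1 := by
    have := Cardinal.isSuccLimit_ord (Cardinal.aleph0_le_aleph 1)
    rw [Ordinal.add_one_eq_succ]; exact this.succ_lt hδ
  exact Set.Countable.biUnion (countable_Iio_of_lt hδ1) fun γ _ => T.level_countable γ

lemma exists_level_mem {U : Set T.A} (hdc : T.DCSubtree U) (hU : ¬ U.Countable)
    {δ : Ordinal} (hδ : δ < ω1) : ∃ y, y ∈ U ∧ T.htf y = δ := by
  have hns : ¬ U ⊆ {x : T.A | T.htf x ≤ δ} := fun h => hU ((countable_le_level T hδ).mono h)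
  obtain ⟨x, hxU, hxδ⟩ := Set.not_subset.1 hns
  have hlt : δ < T.htf x := not_le.1 hxδ
  exact ⟨pred T x δ, pred_mem T hdc hxU δ, htf_pred T (le_of_lt hlt)⟩


lemma width_unbounded (hA : T.Aronszajn) {U : Set T.A} (hdc : T.DCSubtree U)
    (hU : ¬ U.Countable) (n : ℕ) :
    ∃ δ, δ < ω1 ∧ ∃ F : Finset T.A, ↑F ⊆ U ∧ (∀ y ∈ F, T.htf y = δ) ∧ F.card = n + 1 := by
  by_contra hcon
  push_neg at hcon
  -- every level of U is finite
  have key : ∀ δ, δ < ω1 → (U ∩ {x : T.A | T.htf x = δ}).Finite := by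
    intro δ hδ
    by_contra hinf
    obtain ⟨F, hFsub, hFcard⟩ := (Set.Infinite.exists_subset_card_eq hinf (n + 1))
    exact hcon δ hδ F (fun y hy => (hFsub hy).1) (fun y hy => (hFsub hy).2) hFcard
  have h0 : (0 : Ordinal) < ω1 :=
    lt_of_le_of_lt zero_le (Cardinal.ord_lt_ord.2 Cardinal.aleph0_lt_aleph_one)
  haveI : Nonempty (↥(Set.Iio ω1)) := ⟨⟨0, h0⟩⟩
  let 𝒰 : Ultrafilter (↥(Set.Iio ω1)) := Ultrafilter.of Filter.atTop
  have hle : (𝒰 : Filter (↥(Set.Iio ω1))) ≤ Filter.atTop := Ultrafilter.of_le _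
  have hxsel : ∀ δ' : ↥(Set.Iio ω1), ∃ y, y ∈ U ∧ T.htf y = δ'.1 :=
    fun δ' => exists_level_mem T hdc hU δ'.2
  choose xs hxsU hxsht using hxsel
  set E : T.A → Set (↥(Set.Iio ω1)) :=
    fun y => {δ' | T.htf y ≤ δ'.1 ∧ pred T (xs δ') (T.htf y) = y} with hE
  set C : Set T.A := {y | E y ∈ 𝒰} with hC
  have hchain : T.Chain C := by
    have main : ∀ y ∈ C, ∀ z ∈ C, T.htf y ≤ T.htf z → y = z ∨ T.lt y z := by
      intro y hy z hz hle2
      have hmem : E y ∩ E z ∈ 𝒰 :=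
        Ultrafilter.mem_coe.1
          (Filter.inter_mem (Ultrafilter.mem_coe.2 hy) (Ultrafilter.mem_coe.2 hz))
      obtain ⟨δ', hδ'y, hδ'z⟩ := Ultrafilter.nonempty_of_mem hmem
      have h1 : T.htf z ≤ T.htf (xs δ') := by rw [hxsht]; exact hδ'z.1
      have hyz : pred T z (T.htf y) = y := by
        rw [← hδ'z.2, pred_pred T hle2 h1, hδ'y.2]
      rcases eq_or_lt_of_le hle2 with heq | hlt
      · left
        rw [← hyz, heq, pred_self]
      · right
        rw [← hyz]
        exact pred_lt T hlt
    intro y hy z hz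
    rcases le_total (T.htf y) (T.htf z) with h | h
    · rcases main y hy z hz h with h1 | h1
      · exact Or.inl h1
      · exact Or.inr (Or.inl h1)
    · rcases main z hz y hy h with h1 | h1
      · exact Or.inl h1.symm
      · exact Or.inr (Or.inr h1)
  have hmeets : ∀ δ, δ < ω1 → ∃ y ∈ C, T.htf y = δ := by
    intro δ hδ
    have hIci : (Set.Ici (⟨δ, hδ⟩ : ↥(Set.Iio ω1))) ∈ (𝒰 : Filter _) :=
      hle (Filter.Ici_mem_atTop _)
    have hcov : Set.Ici (⟨δ, hδ⟩ : ↥(Set.Iio ω1)) ⊆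
        ⋃ y ∈ U ∩ {x : T.A | T.htf x = δ}, E y := by
      intro δ' hδ'
      have hδle : δ ≤ δ'.1 := hδ'
      have hy' : pred T (xs δ') δ ∈ U ∩ {x : T.A | T.htf x = δ} :=
        ⟨pred_mem T hdc (hxsU δ') δ, htf_pred T (by rw [hxsht]; exact hδle)⟩
      refine Set.mem_biUnion hy' ⟨?_, ?_⟩
      · rw [(hy'.2 : T.htf _ = δ)]; exact hδle
      · rw [(hy'.2 : T.htf _ = δ)]
    have hbig : (⋃ y ∈ U ∩ {x : T.A | T.htf x = δ}, E y) ∈ 𝒰 :=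
      Ultrafilter.mem_coe.1 (Filter.mem_of_superset hIci hcov)
    obtain ⟨y, hyU, hyE⟩ := (Ultrafilter.finite_biUnion_mem_iff (key δ hδ)).1 hbig
    exact ⟨y, hyE, hyU.2⟩
  have hCcnt : C.Countable := hA C hchain
  apply not_countable_Iio_omega1
  refine Set.Countable.mono ?_ (hCcnt.image T.htf)
  intro δ hδ
  obtain ⟨y, hyC, hyht⟩ := hmeets δ hδ
  exact ⟨y, hyC, hyht⟩


lemma mk_A_le : #T.A ≤ Cardinal.aleph 1 := by
  have henum : ∀ δ : Ordinal, ∃ f : ↥{x : T.A | T.htf x = δ} → ℕ, Function.Injective f := by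
    intro δ
    haveI := (T.level_countable δ).to_subtype
    exact Countable.exists_injective_nat _
  choose e he using henum
  let e' : Ordinal → T.A → ℕ := fun δ x => if h : T.htf x = δ then e δ ⟨x, h⟩ else 0
  let Ψ : T.A → (↥(Set.Iio ω1)) × ℕ :=
    fun x => (⟨T.htf x, T.ht_lt_omega1 x⟩, e' (T.htf x) x)
  have hΨ : Function.Injective Ψ := by
    intro x y hxy
    have hh : T.htf x = T.htf y := congrArg (fun p => (Prod.fst p).1) hxy
    have h2 : e' (T.htf x) x = e' (T.htf y) y := congrArg Prod.snd hxy
    rw [← hh] at h2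
    have hx : e' (T.htf x) x = e (T.htf x) ⟨x, rfl⟩ := dif_pos rfl
    have hy : e' (T.htf x) y = e (T.htf x) ⟨y, hh.symm⟩ := dif_pos hh.symm
    rw [hx, hy] at h2
    exact congrArg Subtype.val (he (T.htf x) h2)
  have hle1 : Cardinal.lift.{1, 0} #T.A ≤ Cardinal.lift.{0, 1} #((↥(Set.Iio ω1)) × ℕ) :=
    Cardinal.lift_mk_le'.2 ⟨⟨Ψ, hΨ⟩⟩
  have hprod : #((↥(Set.Iio ω1)) × ℕ) ≤ Cardinal.lift.{1, 0} (Cardinal.aleph 1) := by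
    rw [Cardinal.mk_prod, Cardinal.mk_nat, Ordinal.mk_Iio_ordinal,
      show ω1.card = Cardinal.aleph 1 from Cardinal.card_ord _,
      Cardinal.lift_uzero, ← Cardinal.lift_mul, Cardinal.lift_le]
    exact le_of_eq (Cardinal.mul_eq_left (Cardinal.aleph0_le_aleph 1)
      (le_of_lt Cardinal.aleph0_lt_aleph_one) Cardinal.aleph0_ne_zero)
  have := hle1.trans ((Cardinal.lift_uzero _).le.trans hprod)
  rwa [Cardinal.lift_le] at this


theorem main (T : O1Tree) (hA : T.Aronszajn) (hS : T.StronglyNonSaturated) :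
    (2 : Cardinal.{0}) ^ Cardinal.aleph0.{0} ≠ Cardinal.aleph.{0} 1 := by
  intro hCH
  obtain ⟨Us, h1, h2⟩ := hS
  have hw : ∀ (α : ↥(Set.Iio ω2)) (n : ℕ), ∃ δ, δ < ω1 ∧ ∃ F : Finset T.A,
      ↑F ⊆ Us α.1 ∧ (∀ y ∈ F, T.htf y = δ) ∧ F.card = n + 1 :=
    fun α n => width_unbounded T hA (h1 α.1 α.2).1 (h1 α.1 α.2).2 n
  choose δf hδf F hFsub hFht hFcard using hw
  set D : ↥(Set.Iio ω2) → Ordinal := fun α => ⨆ n, δf α n with hD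
  have hDlt : ∀ α, D α < ω1 := by
    intro α
    have hcof : ω1.cof = Cardinal.aleph 1 := Cardinal.isRegular_aleph_one.cof_eq
    refine Ordinal.iSup_lt_ord ?_ (fun n => hδf α n)
    rw [hcof]
    exact lt_of_le_of_lt Cardinal.mk_le_aleph0 Cardinal.aleph0_lt_aleph_one
  have hDge : ∀ α n, δf α n ≤ D α := fun α n => Ordinal.le_iSup _ n
  set s : ↥(Set.Iio ω2) → Set T.A := fun α => Us α.1 ∩ {x | T.htf x ≤ D α} with hs
  have hscnt : ∀ α, (s α).Countable :=
    fun α => ((countable_le_level T (hDlt α)).mono Set.inter_subset_right)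
  have hcode : ∀ α, ∃ f : ℕ → Option T.A, {y | (some y) ∈ Set.range f} = s α := by
    intro α
    rcases Set.eq_empty_or_nonempty (s α) with he | hne
    · refine ⟨fun _ => none, ?_⟩
      rw [he]; ext y; simp
    · obtain ⟨g, hg⟩ := (hscnt α).exists_eq_range hne
      refine ⟨fun k => some (g k), ?_⟩
      rw [hg]; ext y; simp [eq_comm]
  choose Φ hΦ using hcode
  have hinj : Function.Injective Φ := by
    classical
    intro α β hab
    have hsab : s α = s β := by rw [← hΦ α, ← hΦ β, hab]
    by_contra hne
    have hne' : α.1 ≠ β.1 := fun h => hne (Subtype.ext h)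
    obtain ⟨-, n0, Cs, hcov, hch⟩ := h2 α.1 α.2 β.1 β.2 hne'
    have hFs : ↑(F α n0) ⊆ ⋃ i, Cs i := by
      rw [← hcov]
      intro y hy
      have h1y : y ∈ s α := ⟨hFsub α n0 hy, by
        have hht := hFht α n0 y hy
        simp only [Set.mem_setOf_eq]
        rw [hht]
        exact hDge α n0⟩
      exact ⟨hFsub α n0 hy, (hsab ▸ h1y).1⟩
    rcases Nat.eq_zero_or_pos n0 with hz | n0pos
    · subst hz
      have hFne : (F α 0).Nonempty := Finset.card_pos.1 (by rw [hFcard]; norm_num)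
      obtain ⟨y, hy⟩ := hFne
      have := hFs (Finset.mem_coe.2 hy)
      rw [Set.mem_iUnion] at this
      obtain ⟨i, -⟩ := this
      exact i.elim0
    · let g : T.A → Fin n0 := fun y => if h : ∃ i, y ∈ Cs i then h.choose else ⟨0, n0pos⟩
      have hg : ∀ y ∈ F α n0, y ∈ Cs (g y) := by
        intro y hy
        have hy' : ∃ i, y ∈ Cs i := Set.mem_iUnion.1 (hFs (Finset.mem_coe.2 hy))
        simp only [g, dif_pos hy']
        exact hy'.choose_spec
      obtain ⟨y, hyF, z, hzF, hyz, hgyz⟩ :=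
        Finset.exists_ne_map_eq_of_card_lt_of_maps_to
          (s := F α n0) (t := (Finset.univ : Finset (Fin n0)))
          (by rw [hFcard, Finset.card_univ, Fintype.card_fin]; exact Nat.lt_succ_self n0)
          (fun a _ => Finset.mem_univ (g a))
      have hcy := hg y hyF
      have hcz := hg z hzF
      rw [hgyz] at hcy
      rcases (hch (g z)).1 y hcy z hcz with h | h | h
      · exact hyz h
      · exact absurd (T.ht_lt h)
          (by rw [hFht α n0 y hyF, hFht α n0 z hzF]; exact lt_irrefl _)
      · exact absurd (T.ht_lt h)
          (by rw [hFht α n0 y hyF, hFht α n0 z hzF]; exact lt_irrefl _)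
  have h3 : Cardinal.lift.{0, 1} #(↥(Set.Iio ω2)) ≤ Cardinal.lift.{1, 0} #(ℕ → Option T.A) :=
    Cardinal.lift_mk_le'.2 ⟨⟨Φ, hinj⟩⟩
  have harrow : #(ℕ → Option T.A) ≤ Cardinal.aleph 1 := by
    have hopt : #(Option T.A) ≤ Cardinal.aleph 1 := by
      rw [Cardinal.mk_option]
      calc #T.A + 1 ≤ Cardinal.aleph 1 + 1 := add_le_add_left (mk_A_le T) 1
        _ = Cardinal.aleph 1 := Cardinal.add_one_eq (Cardinal.aleph0_le_aleph 1)
    calc #(ℕ → Option T.A) = #(Option T.A) ^ (ℵ₀ : Cardinal) := by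
          rw [Cardinal.mk_arrow, Cardinal.mk_nat, Cardinal.lift_id, Cardinal.lift_id]
      _ ≤ (Cardinal.aleph 1) ^ (ℵ₀ : Cardinal) := Cardinal.power_le_power_right hopt
      _ = Cardinal.aleph 1 := by
          rw [← hCH, ← Cardinal.power_mul, Cardinal.aleph0_mul_aleph0]
  have h4 : #(↥(Set.Iio ω2)) ≤ Cardinal.lift.{1, 0} (Cardinal.aleph 1) :=
    ((Cardinal.lift_uzero _).symm.le.trans h3).trans (Cardinal.lift_le.2 harrow)
  rw [Ordinal.mk_Iio_ordinal, show ω2.card = Cardinal.aleph 2 from Cardinal.card_ord _,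
    Cardinal.lift_le] at h4
  exact absurd h4 (not_le.2 (Cardinal.aleph_lt_aleph.2 one_lt_two))

end AKSTProof

/-- if there exists a strongly non-saturated Aronszajn tree, then the
Continuum Hypothesis fails. -/
theorem stmt_14 (T : O1Tree) (hA : T.Aronszajn) (hS : T.StronglyNonSaturated) :
    2 ^ Cardinal.aleph0 ≠ Cardinal.aleph 1 := by
  intro hCH
  apply AKSTProof.main T hA hS
  apply Cardinal.lift_injective
  rw [Cardinal.lift_power, Cardinal.lift_two, Cardinal.lift_aleph0, Cardinal.lift_aleph,
    Ordinal.lift_one]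
  exact hCH
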